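/- Let (G, p) be a finite critical net in ℝ^k satisfying the balance condition, and let r > 0 be such that: ‖p x‖ ≠ r for every vertex x; ‖p l‖ > r for every leaf l; and for every edge {x,y} of G, every point q of the segment [p x, p y] with ‖q‖ = r satisfies ⟪q, p y − p x⟫ ≠ 0. Then the length of the net inside the closed ball of radius r about the origin equals the sum over all sphere-crossing points of the inner product of the crossing point with the outward unit edge direction: ∑_{edges {x,y}} μ¹([p x, p y] ∩ closedBall(0,r)) = ∑_{edges {x,y}} ∑_{q ∈ [p x, p y], ‖q‖ = r} ⟪q, w_q⟫, where μ¹ is the one-dimensional Hausdorff measure and, for a crossing point q on the edge {x,y}, w_q = (p y − p x)/‖p y − p x‖ if ⟪q, p y − p x⟫ > 0 and w_q = (p x − p y)/‖p y − p x‖ otherwise (so w_q is the unit direction of the edge at q pointing out of the ball). -/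

import Mathlib

open scoped RealInnerProductSpace MeasureTheory

set_option maxHeartbeats 1000000

open Set MeasureTheory

section Edge
variable {E : Type*} [NormedAddCommGroup E] [InnerProductSpace ℝ E]
  [MeasurableSpace E] [BorelSpace E]

lemma edge_key (a b : E) (hab : a ≠ b) (r : ℝ) (hr : 0 < r)
    (ha : ‖a‖ ≠ r) (hb : ‖b‖ ≠ r)
    (htan : ∀ q ∈ segment ℝ a b, ‖q‖ = r → ⟪q, b - a⟫ ≠ 0) :
    (μH[1] (segment ℝ a b ∩ Metric.closedBall (0 : E) r)).toReal
      = (∑ᶠ q ∈ {q : E | q ∈ segment ℝ a b ∧ ‖q‖ = r},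
          ⟪q, if 0 < ⟪q, b - a⟫ then (‖b - a‖)⁻¹ • (b - a) else (‖b - a‖)⁻¹ • (a - b)⟫)
        + (if ‖a‖ < r then ⟪a, (‖b - a‖)⁻¹ • (a - b)⟫ else 0)
        + (if ‖b‖ < r then ⟪b, (‖b - a‖)⁻¹ • (b - a)⟫ else 0) := by
  have hv : b - a ≠ 0 := sub_ne_zero.mpr (Ne.symm hab)
  set v : E := b - a with hvdef
  set L : ℝ := ‖v‖ with hLdef
  have hL : 0 < L := norm_pos_iff.mpr hv
  set A : ℝ := L ^ 2 with hAdef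
  have hA : 0 < A := by positivity
  set B : ℝ := ⟪a, v⟫ with hBdef
  set C : ℝ := ‖a‖ ^ 2 - r ^ 2 with hCdef
  set g : ℝ → ℝ := fun t => A * t ^ 2 + 2 * B * t + C with hgdef
  set c : ℝ → E := fun t => (AffineMap.lineMap a b : ℝ →ᵃ[ℝ] E) t with hcdef
  have hc : ∀ t : ℝ, c t = a + t • v := by
    intro t; simp [hcdef, AffineMap.lineMap_apply_module']; abel
  have hnormsq : ∀ t : ℝ, ‖c t‖ ^ 2 = g t + r ^ 2 := by
    intro t
    rw [hc, norm_add_sq_real, real_inner_smul_right, norm_smul, Real.norm_eq_abs,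
      mul_pow, sq_abs]
    simp only [hgdef, hAdef, hBdef, hCdef]
    ring
  have hinner : ∀ t : ℝ, ⟪c t, v⟫ = A * t + B := by
    intro t
    rw [hc, inner_add_left, real_inner_smul_left, real_inner_self_eq_norm_sq]
    simp only [hAdef, hBdef, hLdef]; ring
  have hball : ∀ t : ℝ, (c t ∈ Metric.closedBall (0 : E) r ↔ g t ≤ 0) := by
    intro t
    rw [Metric.mem_closedBall, dist_zero_right]
    constructor
    · intro h
      have := hnormsq t
      nlinarith [norm_nonneg (c t)]
    · intro h
      have := hnormsq t
      nlinarith [norm_nonneg (c t)]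
  have hsph : ∀ t : ℝ, (‖c t‖ = r ↔ g t = 0) := by
    intro t
    constructor
    · intro h; have := hnormsq t; nlinarith
    · intro h; have := hnormsq t
      nlinarith [norm_nonneg (c t)]
  have hseg : segment ℝ a b = c '' Icc 0 1 := segment_eq_image_lineMap ℝ a b
  have hcinj : Function.Injective c := by
    intro s t hst
    rw [hc, hc] at hst
    exact smul_left_injective ℝ hv (add_left_cancel hst)
  have hg0 : g 0 = ‖a‖ ^ 2 - r ^ 2 := by simp [hgdef, hCdef]
  have hg1 : g 1 = ‖b‖ ^ 2 - r ^ 2 := by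
    have : c 1 = b := by simp [hcdef]
    have h2 := hnormsq 1
    rw [this] at h2; linarith
  have hg0ne : g 0 ≠ 0 := by
    rw [hg0]; intro h; apply ha; nlinarith [norm_nonneg a]
  have hg1ne : g 1 ≠ 0 := by
    rw [hg1]; intro h; apply hb; nlinarith [norm_nonneg b]
  have halt : ‖a‖ < r ↔ g 0 < 0 := by
    rw [hg0]; constructor <;> intro h <;> nlinarith [norm_nonneg a]
  have hblt : ‖b‖ < r ↔ g 1 < 0 := by
    rw [hg1]; constructor <;> intro h <;> nlinarith [norm_nonneg b]
  -- helper: if g > 0 on [0,1] then everything is empty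
  have hempty : ∀ (_ : ∀ t ∈ Icc (0:ℝ) 1, 0 < g t),
      segment ℝ a b ∩ Metric.closedBall (0 : E) r = ∅ ∧
      {q : E | q ∈ segment ℝ a b ∧ ‖q‖ = r} = ∅ := by
    intro hpos
    constructor
    · ext q
      simp only [mem_inter_iff, mem_empty_iff_false, iff_false]
      rintro ⟨hq1, hq2⟩
      rw [hseg] at hq1
      obtain ⟨t, ht, rfl⟩ := hq1
      exact absurd ((hball t).mp hq2) (not_le.mpr (hpos t ht))
    · ext q
      simp only [mem_setOf_eq, mem_empty_iff_false, iff_false]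
      rintro ⟨hq1, hq2⟩
      rw [hseg] at hq1
      obtain ⟨t, ht, rfl⟩ := hq1
      exact absurd ((hsph t).mp hq2) (ne_of_gt (hpos t ht))
  have hmain0 : (∀ t ∈ Icc (0:ℝ) 1, 0 < g t) →
      (μH[1] (segment ℝ a b ∩ Metric.closedBall (0 : E) r)).toReal
      = (∑ᶠ q ∈ {q : E | q ∈ segment ℝ a b ∧ ‖q‖ = r},
          ⟪q, if 0 < ⟪q, v⟫ then (‖v‖)⁻¹ • v else (‖v‖)⁻¹ • (a - b)⟫)
        + (if ‖a‖ < r then ⟪a, (‖v‖)⁻¹ • (a - b)⟫ else 0)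
        + (if ‖b‖ < r then ⟪b, (‖v‖)⁻¹ • v⟫ else 0) := by
    intro hpos
    obtain ⟨h1, h2⟩ := hempty hpos
    rw [h1, h2]
    have hna : ¬ ‖a‖ < r := by
      rw [halt]; exact not_lt.mpr (hpos 0 ⟨le_refl 0, zero_le_one⟩).le
    have hnb : ¬ ‖b‖ < r := by
      rw [hblt]; exact not_lt.mpr (hpos 1 ⟨zero_le_one, le_refl 1⟩).le
    rw [if_neg hna, if_neg hnb, finsum_mem_empty]
    simp
  rcases lt_trichotomy (B ^ 2 - A * C) 0 with hD | hD | hD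
  · -- no real roots
    refine hmain0 (fun t _ => ?_)
    simp only [hgdef]
    nlinarith [sq_nonneg (A * t + B)]
  · -- double root, excluded by the tangency hypothesis
    have ht0 : (-B / A) ∉ Icc (0:ℝ) 1 := by
      intro hmem
      have hq : c (-B / A) ∈ segment ℝ a b := by
        rw [hseg]; exact mem_image_of_mem c hmem
      have hgt0 : g (-B / A) = 0 := by
        have hAne : A ≠ 0 := ne_of_gt hA
        simp only [hgdef]
        field_simp
        nlinarith
      refine htan _ hq ((hsph _).mpr hgt0) ?_
      rw [hinner]
      field_simp
      ring
    refine hmain0 (fun t ht => ?_)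
    have htne : A * t + B ≠ 0 := by
      intro h
      apply ht0
      have hteq : t = -B / A := by field_simp; linarith
      rwa [hteq] at ht
    simp only [hgdef]
    nlinarith [sq_pos_of_ne_zero htne]
  · -- two distinct roots
    set s : ℝ := Real.sqrt (B ^ 2 - A * C) with hsdef
    have hs : 0 < s := Real.sqrt_pos.mpr hD
    have hs2 : s ^ 2 = B ^ 2 - A * C := Real.sq_sqrt hD.le
    set α : ℝ := (-B - s) / A with hαdef
    set β : ℝ := (-B + s) / A with hβdef
    have hαβ : α < β := by
      rw [hαdef, hβdef]
      exact div_lt_div_of_pos_right (by linarith) hA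
    have hAα : A * α + B = -s := by
      rw [hαdef]; field_simp; ring
    have hAβ : A * β + B = s := by
      rw [hβdef]; field_simp; ring
    have hfac : ∀ t : ℝ, g t = A * (t - α) * (t - β) := by
      intro t
      apply mul_left_cancel₀ (ne_of_gt hA)
      have h1 : A * α = -B - s := by linarith
      have h2 : A * β = -B + s := by linarith
      have expand : A * (A * (t - α) * (t - β)) = (A * t - A * α) * (A * t - A * β) := by
        ring
      rw [expand, h1, h2]
      simp only [hgdef]
      linear_combination hs2
    have hgle : ∀ t : ℝ, (g t ≤ 0 ↔ α ≤ t ∧ t ≤ β) := by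
      intro t
      rw [hfac]
      constructor
      · intro h
        constructor
        · by_contra hcon; push_neg at hcon
          linarith [mul_pos hA (mul_pos (sub_pos.mpr hcon) (sub_pos.mpr (hcon.trans hαβ)))]
        · by_contra hcon; push_neg at hcon
          linarith [mul_pos hA (mul_pos (sub_pos.mpr (hαβ.trans hcon)) (sub_pos.mpr hcon))]
      · rintro ⟨h1, h2⟩
        nlinarith [mul_nonneg (mul_nonneg hA.le (sub_nonneg.mpr h1)) (sub_nonneg.mpr h2)]
    have hgeq : ∀ t : ℝ, (g t = 0 ↔ t = α ∨ t = β) := by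
      intro t
      rw [hfac]
      constructor
      · intro h
        rcases mul_eq_zero.mp h with h' | h'
        · rcases mul_eq_zero.mp h' with h'' | h''
          · exact absurd h'' (ne_of_gt hA)
          · exact Or.inl (by linarith [sub_eq_zero.mp h''])
        · exact Or.inr (by linarith [sub_eq_zero.mp h'])
      · rintro (rfl | rfl) <;> ring
    have hα0 : α ≠ 0 := fun h => hg0ne ((hgeq 0).mpr (Or.inl h.symm))
    have hβ0 : β ≠ 0 := fun h => hg0ne ((hgeq 0).mpr (Or.inr h.symm))
    have hα1 : α ≠ 1 := fun h => hg1ne ((hgeq 1).mpr (Or.inl h.symm))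
    have hβ1 : β ≠ 1 := fun h => hg1ne ((hgeq 1).mpr (Or.inr h.symm))
    have hset : segment ℝ a b ∩ Metric.closedBall (0:E) r
        = c '' Icc (max 0 α) (min 1 β) := by
      have hsub : Icc (0:ℝ) 1 ∩ c ⁻¹' Metric.closedBall (0:E) r
          = Icc (max 0 α) (min 1 β) := by
        ext t
        simp only [mem_inter_iff, mem_preimage, mem_Icc, hball t, hgle t,
          max_le_iff, le_min_iff]
        tauto
      rw [hseg, ← image_inter_preimage, hsub]
    have hLHS : (μH[1] (segment ℝ a b ∩ Metric.closedBall (0:E) r)).toReal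
        = L * max (min 1 β - max 0 α) 0 := by
      rw [hset, hcdef]
      rw [MeasureTheory.hausdorffMeasure_lineMap_image a b,
        MeasureTheory.hausdorffMeasure_real, Real.volume_Icc, ENNReal.smul_def,
        smul_eq_mul, ENNReal.toReal_mul, ENNReal.coe_toReal, coe_nndist,
        ENNReal.toReal_ofReal']
      congr 1
      rw [dist_eq_norm, hLdef, hvdef, norm_sub_rev]
    have hcross : {q : E | q ∈ segment ℝ a b ∧ ‖q‖ = r} = c '' ({α, β} ∩ Icc 0 1) := by
      ext q
      simp only [mem_setOf_eq, hseg, mem_image, mem_inter_iff, mem_insert_iff,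
        mem_singleton_iff]
      constructor
      · rintro ⟨⟨t, ht, rfl⟩, hq⟩
        exact ⟨t, ⟨(hgeq t).mp ((hsph t).mp hq), ht⟩, rfl⟩
      · rintro ⟨t, ⟨hroot, ht⟩, rfl⟩
        exact ⟨⟨t, ht, rfl⟩, (hsph t).mpr ((hgeq t).mpr hroot)⟩
    have hwα : ⟪c α, (‖v‖)⁻¹ • (a - b)⟫ = s / L := by
      have hab' : (a - b : E) = -v := by rw [hvdef]; abel
      rw [real_inner_smul_right, hab', inner_neg_right, hinner, hAα, ← hLdef]
      field_simp
    have hwβ : ⟪c β, (‖v‖)⁻¹ • v⟫ = s / L := by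
      rw [real_inner_smul_right, hinner, hAβ, ← hLdef]
      field_simp
    have hwa : ⟪a, (‖v‖)⁻¹ • (a - b)⟫ = -B / L := by
      have hab' : (a - b : E) = -v := by rw [hvdef]; abel
      rw [real_inner_smul_right, hab', inner_neg_right, ← hBdef, ← hLdef]
      field_simp
    have hwb : ⟪b, (‖v‖)⁻¹ • v⟫ = (A + B) / L := by
      have hb' : (b : E) = a + v := by rw [hvdef]; abel
      rw [real_inner_smul_right, hb', inner_add_left, real_inner_self_eq_norm_sq,
        ← hBdef, ← hLdef]
      rw [hAdef]
      field_simp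
      ring
    have hifα : ¬ (0 < ⟪c α, v⟫) := by
      rw [hinner, hAα]; linarith
    have hifβ : (0 < ⟪c β, v⟫) := by
      rw [hinner, hAβ]; linarith
    have hcαβ : c α ≠ c β := fun h => (ne_of_lt hαβ) (hcinj h)
    have hvalα : ⟪c α, if 0 < ⟪c α, v⟫ then (‖v‖)⁻¹ • v else (‖v‖)⁻¹ • (a - b)⟫
        = s / L := by rw [if_neg hifα]; exact hwα
    have hvalβ : ⟪c β, if 0 < ⟪c β, v⟫ then (‖v‖)⁻¹ • v else (‖v‖)⁻¹ • (a - b)⟫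
        = s / L := by rw [if_pos hifβ]; exact hwβ
    rw [hLHS, hcross]
    rcases lt_or_gt_of_ne hα1 with hα1' | hα1'
    · -- α < 1
      rcases lt_or_gt_of_ne hβ0 with hβ0' | hβ0'
      · -- β < 0 : intersection empty, everything outside
        have hαneg : α < 0 := hαβ.trans hβ0'
        have hia : ({α, β} : Set ℝ) ∩ Icc 0 1 = ∅ := by
          ext t
          simp only [mem_inter_iff, mem_insert_iff, mem_singleton_iff, mem_Icc,
            mem_empty_iff_false, iff_false]
          rintro ⟨rfl | rfl, h1, h2⟩
          · linarith
          · linarith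
        rw [hia, image_empty, finsum_mem_empty]
        have h0a : ¬ ‖a‖ < r := by
          rw [halt, hfac 0]; push_neg
          linarith [mul_pos hA (mul_pos (neg_pos.mpr hαneg) (neg_pos.mpr hβ0'))]
        have h0b : ¬ ‖b‖ < r := by
          rw [hblt, hfac 1]; push_neg
          linarith [mul_pos hA (mul_pos (by linarith : (0:ℝ) < 1 - α)
            (by linarith : (0:ℝ) < 1 - β))]
        rw [if_neg h0a, if_neg h0b]
        rw [min_eq_right (by linarith : β ≤ 1), max_eq_left (by linarith : α ≤ 0)]
        rw [max_eq_right (by linarith : β - 0 ≤ 0)]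
        simp
      · -- 0 < β
        rcases lt_or_gt_of_ne hα0 with hαneg | hαpos
        · -- α < 0
          rcases lt_or_gt_of_ne hβ1 with hβlt | hβgt
          · -- case 3 : α < 0 < β < 1
            have hia : ({α, β} : Set ℝ) ∩ Icc 0 1 = {β} := by
              ext t
              simp only [mem_inter_iff, mem_insert_iff, mem_singleton_iff, mem_Icc]
              constructor
              · rintro ⟨rfl | rfl, h⟩
                · linarith [h.1]
                · rfl
              · rintro rfl
                exact ⟨Or.inr rfl, hβ0'.le, hβlt.le⟩
            rw [hia, image_singleton, finsum_mem_singleton]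
            beta_reduce
            rw [hvalβ]
            have h0a : ‖a‖ < r := by
              rw [halt, hfac 0]
              linarith [mul_pos hA (mul_pos (neg_pos.mpr hαneg) hβ0')]
            have h0b : ¬ ‖b‖ < r := by
              rw [hblt, hfac 1]; push_neg
              linarith [mul_pos hA (mul_pos (by linarith : (0:ℝ) < 1 - α)
                (by linarith : (0:ℝ) < 1 - β))]
            rw [if_pos h0a, if_neg h0b, hwa, add_zero]
            rw [max_eq_left hαneg.le, min_eq_right hβlt.le, sub_zero,
              max_eq_left hβ0'.le, ← add_div, eq_div_iff (ne_of_gt hL)]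
            linear_combination hAβ - β * hAdef
          · -- case 4 : α < 0, 1 < β
            have hia : ({α, β} : Set ℝ) ∩ Icc 0 1 = ∅ := by
              ext t
              simp only [mem_inter_iff, mem_insert_iff, mem_singleton_iff, mem_Icc,
                mem_empty_iff_false, iff_false]
              rintro ⟨rfl | rfl, h1, h2⟩
              · linarith
              · linarith
            rw [hia, image_empty, finsum_mem_empty]
            have h0a : ‖a‖ < r := by
              rw [halt, hfac 0]
              linarith [mul_pos hA (mul_pos (neg_pos.mpr hαneg) hβ0')]
            have h1b : ‖b‖ < r := by
              rw [hblt, hfac 1]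
              linarith [mul_pos hA (mul_pos (by linarith : (0:ℝ) < 1 - α)
                (by linarith : (0:ℝ) < β - 1))]
            rw [if_pos h0a, if_pos h1b, hwa, hwb]
            rw [max_eq_left hαneg.le, min_eq_left hβgt.le, sub_zero,
              max_eq_left zero_le_one, mul_one, zero_add, ← add_div,
              eq_div_iff (ne_of_gt hL)]
            linear_combination -hAdef
        · -- 0 < α
          rcases lt_or_gt_of_ne hβ1 with hβlt | hβgt
          · -- case 1 : 0 < α < β < 1
            have hia : ({α, β} : Set ℝ) ∩ Icc 0 1 = {α, β} := by
              apply inter_eq_left.mpr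
              intro t ht
              simp only [mem_insert_iff, mem_singleton_iff] at ht
              rcases ht with rfl | rfl
              · exact ⟨hαpos.le, hα1'.le⟩
              · exact ⟨hβ0'.le, hβlt.le⟩
            rw [hia, image_pair, finsum_mem_pair hcαβ]
            beta_reduce
            rw [hvalα, hvalβ]
            have h0a : ¬ ‖a‖ < r := by
              rw [halt, hfac 0]; push_neg
              linarith [mul_pos hA (mul_pos hαpos hβ0')]
            have h0b : ¬ ‖b‖ < r := by
              rw [hblt, hfac 1]; push_neg
              linarith [mul_pos hA (mul_pos (by linarith : (0:ℝ) < 1 - α)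
                (by linarith : (0:ℝ) < 1 - β))]
            rw [if_neg h0a, if_neg h0b, add_zero, add_zero]
            rw [max_eq_right hαpos.le, min_eq_right hβlt.le,
              max_eq_left (by linarith : (0:ℝ) ≤ β - α), ← add_div,
              eq_div_iff (ne_of_gt hL)]
            linear_combination hAβ - hAα - (β - α) * hAdef
          · -- case 2 : 0 < α < 1 < β
            have hia : ({α, β} : Set ℝ) ∩ Icc 0 1 = {α} := by
              ext t
              simp only [mem_inter_iff, mem_insert_iff, mem_singleton_iff, mem_Icc]
              constructor
              · rintro ⟨rfl | rfl, h⟩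
                · rfl
                · linarith [h.2]
              · rintro rfl
                exact ⟨Or.inl rfl, hαpos.le, hα1'.le⟩
            rw [hia, image_singleton, finsum_mem_singleton]
            beta_reduce
            rw [hvalα]
            have h0a : ¬ ‖a‖ < r := by
              rw [halt, hfac 0]; push_neg
              linarith [mul_pos hA (mul_pos hαpos hβ0')]
            have h1b : ‖b‖ < r := by
              rw [hblt, hfac 1]
              linarith [mul_pos hA (mul_pos (by linarith : (0:ℝ) < 1 - α)
                (by linarith : (0:ℝ) < β - 1))]
            rw [if_neg h0a, if_pos h1b, hwb, add_zero]
            rw [max_eq_right hαpos.le, min_eq_left hβgt.le,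
              max_eq_left (by linarith : (0:ℝ) ≤ 1 - α), ← add_div,
              eq_div_iff (ne_of_gt hL)]
            linear_combination -hAα - (1 - α) * hAdef
    · -- 1 < α : both roots beyond the segment
      have hβ1' : 1 < β := hα1'.trans hαβ
      have hαpos : 0 < α := lt_trans one_pos hα1'
      have hia : ({α, β} : Set ℝ) ∩ Icc 0 1 = ∅ := by
        ext t
        simp only [mem_inter_iff, mem_insert_iff, mem_singleton_iff, mem_Icc,
          mem_empty_iff_false, iff_false]
        rintro ⟨rfl | rfl, h1, h2⟩
        · linarith
        · linarith
      rw [hia, image_empty, finsum_mem_empty]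
      have h0a : ¬ ‖a‖ < r := by
        rw [halt, hfac 0]; push_neg
        linarith [mul_pos hA (mul_pos hαpos (by linarith : (0:ℝ) < β))]
      have h0b : ¬ ‖b‖ < r := by
        rw [hblt, hfac 1]; push_neg
        linarith [mul_pos hA (mul_pos (by linarith : (0:ℝ) < α - 1)
          (by linarith : (0:ℝ) < β - 1))]
      rw [if_neg h0a, if_neg h0b]
      rw [min_eq_left (by linarith : (1:ℝ) ≤ β), max_eq_right hαpos.le]
      rw [max_eq_right (by linarith : 1 - α ≤ 0)]
      simp

end Edge


/-- Let `(G, p)` be a finite critical net in `ℝ^k` satisfying the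
balance condition, and let `r > 0` be a radius such that no vertex lies on the sphere
of radius `r`, every leaf lies outside the closed ball of radius `r`, and no edge is
tangent to the sphere of radius `r` at a crossing point.  Then the length (1-dimensional
Hausdorff measure) of the net inside the closed ball of radius `r` equals the sum, over
all points where an edge crosses the sphere, of the inner product of the crossing point
with the outward unit direction of the edge.  (Sums over unordered edges are written as
half the corresponding sums over ordered pairs of adjacent vertices.) -/
theorem length_in_ball_eq_sum_crossings
    {k : ℕ} (hk : 1 ≤ k) {V : Type*} [Fintype V] [DecidableEq V]
    (G : SimpleGraph V) [DecidableRel G.Adj]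
    (p : V → EuclideanSpace ℝ (Fin k)) (hinj : Function.Injective p)
    (hdeg1 : ∀ x : V, 1 ≤ G.degree x)
    (hnoLL : ∀ x y : V, G.Adj x y → ¬(G.degree x = 1 ∧ G.degree y = 1))
    (hbal : ∀ x : V, 2 ≤ G.degree x →
      ∑ y ∈ G.neighborFinset x, (‖p x - p y‖)⁻¹ • (p x - p y) = 0)
    (r : ℝ) (hr : 0 < r)
    (hsphere : ∀ x : V, ‖p x‖ ≠ r)
    (hleafout : ∀ l : V, G.degree l = 1 → r < ‖p l‖)
    (htangent : ∀ x y : V, G.Adj x y → ∀ q ∈ segment ℝ (p x) (p y), ‖q‖ = r →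
      ⟪q, p y - p x⟫ ≠ 0) :
    (1 / 2 : ℝ) * ∑ x : V, ∑ y ∈ G.neighborFinset x,
        (μH[1] (segment ℝ (p x) (p y) ∩ Metric.closedBall (0 : EuclideanSpace ℝ (Fin k)) r)).toReal
      = (1 / 2 : ℝ) * ∑ x : V, ∑ y ∈ G.neighborFinset x,
          ∑ᶠ q ∈ {q : EuclideanSpace ℝ (Fin k) | q ∈ segment ℝ (p x) (p y) ∧ ‖q‖ = r},
            ⟪q, if 0 < ⟪q, p y - p x⟫
                then (‖p y - p x‖)⁻¹ • (p y - p x)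
                else (‖p y - p x‖)⁻¹ • (p x - p y)⟫ := by
  classical
  have hswap : ∀ f : V → V → ℝ,
      ∑ x : V, ∑ y ∈ G.neighborFinset x, f x y
        = ∑ x : V, ∑ y ∈ G.neighborFinset x, f y x := by
    intro f
    rw [Finset.sum_sigma' Finset.univ _ f,
        Finset.sum_sigma' Finset.univ _ (fun x y => f y x)]
    refine Finset.sum_nbij' (fun z => ⟨z.2, z.1⟩) (fun z => ⟨z.2, z.1⟩) ?_ ?_ ?_ ?_ ?_
    · intro z hz
      simp only [Finset.mem_sigma, Finset.mem_univ, true_and,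
        SimpleGraph.mem_neighborFinset] at hz ⊢
      exact hz.symm
    · intro z hz
      simp only [Finset.mem_sigma, Finset.mem_univ, true_and,
        SimpleGraph.mem_neighborFinset] at hz ⊢
      exact hz.symm
    · intro z _; rfl
    · intro z _; rfl
    · intro z _; rfl
  have hedge : ∀ x y : V, G.Adj x y →
      (μH[1] (segment ℝ (p x) (p y)
          ∩ Metric.closedBall (0 : EuclideanSpace ℝ (Fin k)) r)).toReal
        = (∑ᶠ q ∈ {q : EuclideanSpace ℝ (Fin k) | q ∈ segment ℝ (p x) (p y) ∧ ‖q‖ = r},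
            ⟪q, if 0 < ⟪q, p y - p x⟫ then (‖p y - p x‖)⁻¹ • (p y - p x)
                else (‖p y - p x‖)⁻¹ • (p x - p y)⟫)
          + ((if ‖p x‖ < r then ⟪p x, (‖p y - p x‖)⁻¹ • (p x - p y)⟫ else 0)
            + (if ‖p y‖ < r then ⟪p y, (‖p y - p x‖)⁻¹ • (p y - p x)⟫ else 0)) := by
    intro x y hadj
    have h := edge_key (p x) (p y) (fun h => hadj.ne (hinj h)) r hr (hsphere x) (hsphere y)
      (htangent x y hadj)
    rw [h]; ring
  have step1 : ∑ x : V, ∑ y ∈ G.neighborFinset x,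
      (μH[1] (segment ℝ (p x) (p y)
          ∩ Metric.closedBall (0 : EuclideanSpace ℝ (Fin k)) r)).toReal
    = ∑ x : V, ∑ y ∈ G.neighborFinset x,
      ((∑ᶠ q ∈ {q : EuclideanSpace ℝ (Fin k) | q ∈ segment ℝ (p x) (p y) ∧ ‖q‖ = r},
            ⟪q, if 0 < ⟪q, p y - p x⟫ then (‖p y - p x‖)⁻¹ • (p y - p x)
                else (‖p y - p x‖)⁻¹ • (p x - p y)⟫)
          + ((if ‖p x‖ < r then ⟪p x, (‖p y - p x‖)⁻¹ • (p x - p y)⟫ else 0)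
            + (if ‖p y‖ < r then ⟪p y, (‖p y - p x‖)⁻¹ • (p y - p x)⟫ else 0))) :=
    Finset.sum_congr rfl fun x _ => Finset.sum_congr rfl fun y hy =>
      hedge x y (by rwa [SimpleGraph.mem_neighborFinset] at hy)
  have stepA : ∑ x : V, ∑ y ∈ G.neighborFinset x,
      (if ‖p x‖ < r then ⟪p x, (‖p y - p x‖)⁻¹ • (p x - p y)⟫ else 0) = 0 := by
    apply Finset.sum_eq_zero
    intro x _
    by_cases hx : ‖p x‖ < r
    · have hdeg2 : 2 ≤ G.degree x := by
        have h1 := hdeg1 x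
        by_contra hlt
        have hone : G.degree x = 1 := by omega
        exact absurd (hleafout x hone) (by linarith)
      have hb := hbal x hdeg2
      simp only [if_pos hx]
      have hrw : ∑ y ∈ G.neighborFinset x, ⟪p x, (‖p y - p x‖)⁻¹ • (p x - p y)⟫
          = ⟪p x, ∑ y ∈ G.neighborFinset x, (‖p x - p y‖)⁻¹ • (p x - p y)⟫ := by
        rw [inner_sum]
        exact Finset.sum_congr rfl fun y _ => by rw [norm_sub_rev]
      rw [hrw, hb, inner_zero_right]
    · simp only [if_neg hx]
      exact Finset.sum_const_zero
  have stepB : ∑ x : V, ∑ y ∈ G.neighborFinset x,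
      (if ‖p y‖ < r then ⟪p y, (‖p y - p x‖)⁻¹ • (p y - p x)⟫ else 0) = 0 := by
    rw [hswap (fun x y => if ‖p y‖ < r then ⟪p y, (‖p y - p x‖)⁻¹ • (p y - p x)⟫ else 0)]
    refine Eq.trans (Finset.sum_congr rfl fun x _ => Finset.sum_congr rfl fun y _ => ?_) stepA
    simp only [norm_sub_rev (p x) (p y)]
  rw [step1]
  simp only [Finset.sum_add_distrib]
  rw [stepA, stepB]
  ring
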